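/- Let α > 0 with α ≠ 1, let 0 < x_{N-1} < 1, and let u_{N-1}, u_N ∈ ℝ. For any ω ∈ ℝ, the function v(x) = ((1-x)^α/(1-x_{N-1})^α)(u_{N-1} - u_N) + u_N + (ω/(1-α))(1-x)(1 - ((1-x)/(1-x_{N-1}))^{α-1}) satisfies v(x_{N-1}) = u_{N-1}, is continuous up to x = 1 with v(1) = u_N, and solves ((1-x)v' + α v)' = ω on (x_{N-1}, 1). -/

import Mathlib

theorem stmt_8 (α xN1 uN1 uN ω : ℝ) (hα : 0 < α) (hα1 : α ≠ 1)
    (h0 : 0 < xN1) (h1 : xN1 < 1)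
    (v : ℝ → ℝ)
    (hv : ∀ x, v x = ((1 - x) ^ α / (1 - xN1) ^ α) * (uN1 - uN) + uN +
      (ω / (1 - α)) * (1 - x) * (1 - ((1 - x) / (1 - xN1)) ^ (α - 1))) :
    v xN1 = uN1 ∧
    Filter.Tendsto v (nhdsWithin 1 (Set.Iio 1)) (nhds uN) ∧
    v 1 = uN ∧
    (∀ x ∈ Set.Ioo xN1 1,
      deriv (fun y => (1 - y) * deriv v y + α * v y) x = ω) := by
  have hK : (0:ℝ) < 1 - xN1 := by linarith
  have hKα : (0:ℝ) < (1 - xN1) ^ α := Real.rpow_pos_of_pos hK α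
  have hKα1 : (0:ℝ) < (1 - xN1) ^ (α - 1) := Real.rpow_pos_of_pos hK _
  have h1α : (1:ℝ) - α ≠ 0 := by intro h; apply hα1; linarith
  have hα1' : α - 1 ≠ 0 := by intro h; apply hα1; linarith
  set B := ω / (1 - α) with hB
  set D := (uN1 - uN) / (1 - xN1) ^ α - B / (1 - xN1) ^ (α - 1) with hD
  set w : ℝ → ℝ := fun x => D * (1 - x) ^ α + B * (1 - x) + uN with hw
  have hmul : ∀ y : ℝ, y < 1 → (1 - y) ^ α = (1 - y) * (1 - y) ^ (α - 1) := by
    intro y hy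
    have ht : (0:ℝ) < 1 - y := by linarith
    have h := Real.rpow_add ht 1 (α - 1)
    rw [Real.rpow_one] at h
    have he : 1 + (α - 1) = α := by ring
    rw [he] at h
    exact h
  have hvw : ∀ x < 1, v x = w x := by
    intro x hx
    have ht : (0:ℝ) < 1 - x := by linarith
    rw [hv, hw]
    have hdiv : ((1 - x) / (1 - xN1)) ^ (α - 1)
        = (1 - x) ^ (α - 1) / (1 - xN1) ^ (α - 1) := Real.div_rpow ht.le hK.le _
    rw [hdiv, hD]
    have hm := hmul x hx
    field_simp
    linear_combination (B * (1 - xN1) ^ α) * hm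
  have hv1 : v 1 = uN := by
    rw [hv, show (1:ℝ) - 1 = 0 from by norm_num, Real.zero_rpow hα.ne']
    ring
  refine ⟨?_, ?_, hv1, ?_⟩
  · rw [hv]
    rw [div_self hK.ne', Real.one_rpow, div_self hKα.ne']
    ring
  · have hrp0 : ContinuousAt (fun t : ℝ => t ^ α) 0 :=
      Real.continuousAt_rpow_const 0 α (Or.inr hα.le)
    have hlin : ContinuousAt (fun x : ℝ => 1 - x) 1 :=
      (continuousAt_const.sub continuousAt_id)
    have hrp : ContinuousAt (fun x : ℝ => (1 - x) ^ α) 1 := by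
      have h := ContinuousAt.comp (g := fun t : ℝ => t ^ α)
        (by norm_num; exact hrp0) hlin
      exact h
    have hcw : ContinuousAt w 1 := by
      exact ((continuousAt_const.mul hrp).add (continuousAt_const.mul hlin)).add
        continuousAt_const
    have hw1 : w 1 = uN := by
      show D * (1 - 1) ^ α + B * (1 - 1) + uN = uN
      rw [show (1:ℝ) - 1 = 0 from by norm_num, Real.zero_rpow hα.ne']; ring
    have htw : Filter.Tendsto w (nhdsWithin 1 (Set.Iio 1)) (nhds uN) := by
      rw [← hw1]
      exact hcw.continuousWithinAt.tendsto
    exact htw.congr'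
      (Filter.eventuallyEq_of_mem self_mem_nhdsWithin fun y hy => (hvw y hy).symm)
  · intro x hx
    have hxI : Set.Iio (1:ℝ) ∈ nhds x := Iio_mem_nhds hx.2
    have hderiv : ∀ y < 1,
        deriv v y = D * (α * (1 - y) ^ (α - 1) * (-1)) + B * (-1) := by
      intro y hy
      have hty : (0:ℝ) < 1 - y := by linarith
      have h1 : HasDerivAt (fun x : ℝ => 1 - x) (-1) y := by
        simpa using (hasDerivAt_id y).const_sub 1
      have hrp : HasDerivAt (fun t : ℝ => t ^ α) (α * (1 - y) ^ (α - 1)) (1 - y) :=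
        Real.hasDerivAt_rpow_const (Or.inl hty.ne')
      have hcomp : HasDerivAt (fun x : ℝ => (1 - x) ^ α)
          (α * (1 - y) ^ (α - 1) * (-1)) y := hrp.comp y h1
      have hw' : HasDerivAt w (D * (α * (1 - y) ^ (α - 1) * (-1)) + B * (-1)) y :=
        ((hcomp.const_mul D).add (h1.const_mul B)).add_const uN
      have hvv : HasDerivAt v (D * (α * (1 - y) ^ (α - 1) * (-1)) + B * (-1)) y :=
        hw'.congr_of_eventuallyEq
          (Filter.eventuallyEq_of_mem (Iio_mem_nhds hy) fun z hz => hvw z hz)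
      exact hvv.deriv
    have hBω : B * (α - 1) = -ω := by
      rw [hB]; field_simp; ring
    have hF : (fun y => (1 - y) * deriv v y + α * v y)
        =ᶠ[nhds x] (fun y => -ω * (1 - y) + α * uN) := by
      filter_upwards [hxI] with y hy
      rw [hderiv y hy, hvw y hy, hw]
      have hm := hmul y hy
      linear_combination (D * α) * hm + (1 - y) * hBω
    have hD1 : HasDerivAt (fun y : ℝ => -ω * (1 - y) + α * uN) (-ω * (-1)) x := by
      have h1 : HasDerivAt (fun x : ℝ => 1 - x) (-1) x := by
        simpa using (hasDerivAt_id x).const_sub 1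
      exact (h1.const_mul (-ω)).add_const _
    rw [hF.deriv_eq, hD1.deriv]; ring
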